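/- Fix an integer m ≥ 2 and a constant K > 0. Let a^X, a^Y : [0,∞) × Ω → ℝ be jointly measurable stochastic processes on a probability space (Ω, F, P) satisfying sup_{s ≥ 0} E[|a^X_s|^{2m}] ≤ K and sup_{s ≥ 0} E[|a^Y_s|^{2m}] ≤ K. For positive integers n, T and a positive integer k_n dividing n, for a block index j ∈ {1, …, n/k_n}, set i_{t,ℓ} = (t−1) + (ℓ−1)/n for t ∈ {1,…,T} and ℓ ∈ {1,…,n}, and define ζ₁ⁿ(t, τ_j) = (n/k_n) ∑_{ℓ=(j−1)k_n+1}^{j k_n} ( ∫_{i_{t,ℓ}}^{i_{t,ℓ+1}} a^X_s ds ) · ( ∫_{i_{t,ℓ}}^{i_{t,ℓ+1}} a^Y_s ds ), where the interval integrals are pathwise Lebesgue integrals (finite almost surely by the moment bounds). Then there exists a constant C, depending only on m and K, such that E[ | T^{−1} ∑_{t=1}^{T} ζ₁ⁿ(t, τ_j) |^{m} ] ≤ C / n^{m}. -/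

import Mathlib

open MeasureTheory intervalIntegral Finset
open scoped ENNReal NNReal

/-- Hölder's inequality in power form: `(∫⁻ g)^p ≤ μ(univ)^(p-1) * ∫⁻ g^p`. -/
lemma aux_lintegral_pow_le {α : Type*} [MeasurableSpace α] (μ : Measure α)
    (g : α → ℝ≥0∞) (hg : AEMeasurable g μ) {p : ℕ} (hp : 1 < p) :
    (∫⁻ x, g x ∂μ) ^ p ≤ μ Set.univ ^ (p - 1) * ∫⁻ x, g x ^ p ∂μ := by
  have hp1 : (1 : ℝ) < (p : ℝ) := by exact_mod_cast hp
  have hp0 : (p : ℝ) ≠ 0 := by positivity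
  have hp1' : (p : ℝ) - 1 ≠ 0 := by
    have : (1 : ℝ) < (p : ℝ) := hp1
    linarith
  have hconj := Real.HolderConjugate.conjExponent hp1
  have h := ENNReal.lintegral_mul_le_Lp_mul_Lq μ hconj hg
    (aemeasurable_const (b := (1 : ℝ≥0∞)))
  simp only [Pi.mul_apply, mul_one, ENNReal.one_rpow, lintegral_const, one_mul] at h
  have hq : 1 / Real.conjExponent (p : ℝ) * (p : ℝ) = (p : ℝ) - 1 := by
    rw [show Real.conjExponent (p : ℝ) = (p : ℝ) / ((p : ℝ) - 1) from rfl, one_div_div,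
      div_mul_cancel₀ _ hp0]
  have h2 : (∫⁻ x, g x ∂μ) ^ (p : ℝ)
      ≤ (∫⁻ x, g x ^ (p : ℝ) ∂μ) * μ Set.univ ^ ((p : ℝ) - 1) := by
    calc (∫⁻ x, g x ∂μ) ^ (p : ℝ)
        ≤ ((∫⁻ x, g x ^ (p : ℝ) ∂μ) ^ (1 / (p : ℝ))
            * μ Set.univ ^ (1 / Real.conjExponent (p : ℝ))) ^ (p : ℝ) :=
          ENNReal.rpow_le_rpow h (by positivity)
      _ = (∫⁻ x, g x ^ (p : ℝ) ∂μ) ^ (1 / (p : ℝ) * (p : ℝ))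
            * μ Set.univ ^ (1 / Real.conjExponent (p : ℝ) * (p : ℝ)) := by
          rw [ENNReal.mul_rpow_of_nonneg _ _ (by positivity), ← ENNReal.rpow_mul,
            ← ENNReal.rpow_mul]
      _ = _ := by
          rw [one_div, inv_mul_cancel₀ hp0, ENNReal.rpow_one, hq]
  have hcast : ((p : ℝ) - 1) = ((p - 1 : ℕ) : ℝ) := by
    have : 1 ≤ p := hp.le
    push_cast [Nat.cast_sub this]
    ring
  calc (∫⁻ x, g x ∂μ) ^ p = (∫⁻ x, g x ∂μ) ^ (p : ℝ) := by
        rw [ENNReal.rpow_natCast]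
    _ ≤ (∫⁻ x, g x ^ (p : ℝ) ∂μ) * μ Set.univ ^ ((p : ℝ) - 1) := h2
    _ = μ Set.univ ^ (p - 1) * ∫⁻ x, g x ^ p ∂μ := by
        rw [hcast, ENNReal.rpow_natCast, mul_comm]
        congr 1
        refine lintegral_congr fun x => ?_
        rw [ENNReal.rpow_natCast]

/-- Moment bound for the pathwise interval integral of a process with uniformly
bounded `p`-th moments. -/
lemma aux_moment {Ω : Type} [MeasurableSpace Ω] (P : Measure Ω) [SFinite P]
    (f : ℝ → Ω → ℝ) (hf : Measurable (Function.uncurry f)) {p : ℕ} (hp : 1 < p)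
    {K : ℝ}
    (hmom : ∀ s : ℝ, 0 ≤ s → ∫⁻ ω, ENNReal.ofReal (|f s ω| ^ p) ∂P ≤ ENNReal.ofReal K)
    {a b : ℝ} (ha : 0 ≤ a) (hab : a ≤ b) :
    ∫⁻ ω, ENNReal.ofReal (|∫ s in a..b, f s ω| ^ p) ∂P
      ≤ ENNReal.ofReal K * ENNReal.ofReal (b - a) ^ p := by
  have hIoc : ∀ ω, ENNReal.ofReal (|∫ s in a..b, f s ω| ^ p)
      ≤ volume (Set.Ioc a b) ^ (p - 1)
          * ∫⁻ s in Set.Ioc a b, ENNReal.ofReal (|f s ω| ^ p) := by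
    intro ω
    have hmeas : Measurable fun s => f s ω :=
      hf.comp (measurable_id.prodMk measurable_const)
    have h1 : ENNReal.ofReal |∫ s in a..b, f s ω|
        ≤ ∫⁻ s in Set.Ioc a b, ENNReal.ofReal |f s ω| := by
      rw [intervalIntegral.integral_of_le hab, ← Real.enorm_eq_ofReal_abs]
      refine le_trans (enorm_integral_le_lintegral_enorm _) (le_of_eq ?_)
      exact lintegral_congr fun s => Real.enorm_eq_ofReal_abs _
    calc ENNReal.ofReal (|∫ s in a..b, f s ω| ^ p)
        = ENNReal.ofReal |∫ s in a..b, f s ω| ^ p :=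
          ENNReal.ofReal_pow (abs_nonneg _) p
      _ ≤ (∫⁻ s in Set.Ioc a b, ENNReal.ofReal |f s ω|) ^ p := by gcongr
      _ ≤ (volume.restrict (Set.Ioc a b)) Set.univ ^ (p - 1)
            * ∫⁻ s in Set.Ioc a b, ENNReal.ofReal |f s ω| ^ p :=
          aux_lintegral_pow_le _ _ hmeas.abs.ennreal_ofReal.aemeasurable hp
      _ = volume (Set.Ioc a b) ^ (p - 1)
            * ∫⁻ s in Set.Ioc a b, ENNReal.ofReal (|f s ω| ^ p) := by
          rw [Measure.restrict_apply_univ]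
          congr 1
          exact lintegral_congr fun s => (ENNReal.ofReal_pow (abs_nonneg _) p).symm
  have hswapmeas : AEMeasurable
      (Function.uncurry fun (ω : Ω) (s : ℝ) => ENNReal.ofReal (|f s ω| ^ p))
      (P.prod (volume.restrict (Set.Ioc a b))) := by
    have : Measurable fun z : Ω × ℝ => ENNReal.ofReal (|f z.2 z.1| ^ p) :=
      (((hf.comp measurable_swap).abs.pow_const p)).ennreal_ofReal
    exact this.aemeasurable
  calc ∫⁻ ω, ENNReal.ofReal (|∫ s in a..b, f s ω| ^ p) ∂P
      ≤ ∫⁻ ω, (volume (Set.Ioc a b) ^ (p - 1)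
          * ∫⁻ s in Set.Ioc a b, ENNReal.ofReal (|f s ω| ^ p)) ∂P :=
        lintegral_mono hIoc
    _ = volume (Set.Ioc a b) ^ (p - 1)
          * ∫⁻ ω, (∫⁻ s in Set.Ioc a b, ENNReal.ofReal (|f s ω| ^ p)) ∂P := by
        refine lintegral_const_mul' _ _ ?_
        exact ENNReal.pow_ne_top (by simp [Real.volume_Ioc])
    _ = volume (Set.Ioc a b) ^ (p - 1)
          * ∫⁻ s in Set.Ioc a b, (∫⁻ ω, ENNReal.ofReal (|f s ω| ^ p) ∂P) := by
        rw [lintegral_lintegral_swap hswapmeas]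
    _ ≤ volume (Set.Ioc a b) ^ (p - 1)
          * ∫⁻ _ in Set.Ioc a b, ENNReal.ofReal K := by
        refine mul_le_mul_right ?_ _
        refine lintegral_mono_ae ?_
        refine (ae_restrict_iff' measurableSet_Ioc).2 (Filter.Eventually.of_forall ?_)
        exact fun s hs => hmom s (le_trans ha hs.1.le)
    _ = ENNReal.ofReal K * ENNReal.ofReal (b - a) ^ p := by
        rw [lintegral_const, Measure.restrict_apply_univ, Real.volume_Ioc]
        have hp1 : 1 ≤ p := hp.le
        rw [mul_comm (ENNReal.ofReal K), ← mul_assoc, ← pow_succ,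
          Nat.sub_add_cancel hp1, mul_comm]

/-- AM–GM type bound: `(x y)^m ≤ (x^{2m} + y^{2m})/2` for nonnegative reals. -/
lemma aux_amgm {x y : ℝ} (hx : 0 ≤ x) (hy : 0 ≤ y) (m : ℕ) :
    (x * y) ^ m ≤ (x ^ (2 * m) + y ^ (2 * m)) / 2 := by
  have h := two_mul_le_add_sq (x ^ m) (y ^ m)
  have e1 : (x ^ m) ^ 2 = x ^ (2 * m) := by rw [← pow_mul, mul_comm]
  have e2 : (y ^ m) ^ 2 = y ^ (2 * m) := by rw [← pow_mul, mul_comm]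
  rw [e1, e2] at h
  rw [mul_pow]
  linarith

/-- Combination step: second moment bounds on each block summand give a bound
on the `m`-th moment of the normalised block sum. -/
lemma aux_combine {Ω : Type} [MeasurableSpace Ω] (P : Measure Ω)
    {m : ℕ} (hm : 1 ≤ m) {N : Finset (ℕ × ℕ)} (hNne : N.Nonempty)
    (X Y : ℕ × ℕ → Ω → ℝ)
    (hXm : ∀ p ∈ N, Measurable (X p)) (hYm : ∀ p ∈ N, Measurable (Y p))
    (B : ℝ≥0∞)
    (hXb : ∀ p ∈ N, ∫⁻ ω, ENNReal.ofReal (|X p ω| ^ (2 * m)) ∂P ≤ B)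
    (hYb : ∀ p ∈ N, ∫⁻ ω, ENNReal.ofReal (|Y p ω| ^ (2 * m)) ∂P ≤ B)
    (c : ℝ) :
    ∫⁻ ω, ENNReal.ofReal (|c * ∑ p ∈ N, X p ω * Y p ω| ^ m) ∂P
      ≤ ENNReal.ofReal (|c| ^ m * (N.card : ℝ) ^ (m - 1)) * ((N.card : ℝ≥0∞) * B) := by
  obtain ⟨m', rfl⟩ : ∃ m', m = m' + 1 := ⟨m - 1, by omega⟩
  simp only [Nat.add_sub_cancel]
  have hcard : (0 : ℝ) < (N.card : ℝ) := by exact_mod_cast Finset.card_pos.2 hNne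
  set q : ℝ := |c| ^ (m' + 1) * (N.card : ℝ) ^ m' * (1 / 2) with hqdef
  have hq0 : 0 ≤ q := by positivity
  have hpt : ∀ ω, ENNReal.ofReal (|c * ∑ p ∈ N, X p ω * Y p ω| ^ (m' + 1))
      ≤ ENNReal.ofReal (q * ∑ p ∈ N,
          (|X p ω| ^ (2 * (m' + 1)) + |Y p ω| ^ (2 * (m' + 1)))) := by
    intro ω
    apply ENNReal.ofReal_le_ofReal
    have h1 : |c * ∑ p ∈ N, X p ω * Y p ω|
        ≤ |c| * ∑ p ∈ N, |X p ω| * |Y p ω| := by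
      rw [abs_mul]
      refine mul_le_mul_of_nonneg_left ?_ (abs_nonneg c)
      refine (Finset.abs_sum_le_sum_abs _ _).trans (le_of_eq ?_)
      exact Finset.sum_congr rfl fun p _ => abs_mul _ _
    have h2 : (∑ p ∈ N, |X p ω| * |Y p ω|) ^ (m' + 1)
        ≤ (N.card : ℝ) ^ m' * ∑ p ∈ N, (|X p ω| * |Y p ω|) ^ (m' + 1) := by
      have h := pow_sum_div_card_le_sum_pow
        (f := fun p => |X p ω| * |Y p ω|) (s := N)
        (fun i _ => mul_nonneg (abs_nonneg _) (abs_nonneg _)) m'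
      rw [div_le_iff₀ (by positivity)] at h
      calc (∑ p ∈ N, |X p ω| * |Y p ω|) ^ (m' + 1)
          ≤ (∑ p ∈ N, (|X p ω| * |Y p ω|) ^ (m' + 1)) * (N.card : ℝ) ^ m' := h
        _ = _ := by ring
    have h3 : ∑ p ∈ N, (|X p ω| * |Y p ω|) ^ (m' + 1)
        ≤ ∑ p ∈ N, (|X p ω| ^ (2 * (m' + 1)) + |Y p ω| ^ (2 * (m' + 1))) / 2 :=
      Finset.sum_le_sum fun p _ => aux_amgm (abs_nonneg _) (abs_nonneg _) (m' + 1)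
    calc |c * ∑ p ∈ N, X p ω * Y p ω| ^ (m' + 1)
        ≤ (|c| * ∑ p ∈ N, |X p ω| * |Y p ω|) ^ (m' + 1) := by
          refine pow_le_pow_left₀ (abs_nonneg _) h1 _
      _ = |c| ^ (m' + 1) * (∑ p ∈ N, |X p ω| * |Y p ω|) ^ (m' + 1) := mul_pow _ _ _
      _ ≤ |c| ^ (m' + 1)
            * ((N.card : ℝ) ^ m' * ∑ p ∈ N, (|X p ω| * |Y p ω|) ^ (m' + 1)) :=
          mul_le_mul_of_nonneg_left h2 (by positivity)
      _ ≤ |c| ^ (m' + 1) * ((N.card : ℝ) ^ m'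
            * ∑ p ∈ N, (|X p ω| ^ (2 * (m' + 1)) + |Y p ω| ^ (2 * (m' + 1))) / 2) := by
          refine mul_le_mul_of_nonneg_left ?_ (by positivity)
          exact mul_le_mul_of_nonneg_left h3 (by positivity)
      _ = q * ∑ p ∈ N, (|X p ω| ^ (2 * (m' + 1)) + |Y p ω| ^ (2 * (m' + 1))) := by
          rw [hqdef, ← Finset.sum_div]
          ring
  have hmeas : ∀ p ∈ N, Measurable fun ω =>
      ENNReal.ofReal (|X p ω| ^ (2 * (m' + 1)))
        + ENNReal.ofReal (|Y p ω| ^ (2 * (m' + 1))) := by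
    intro p hp
    exact (((hXm p hp).abs.pow_const _).ennreal_ofReal).add
      (((hYm p hp).abs.pow_const _).ennreal_ofReal)
  calc ∫⁻ ω, ENNReal.ofReal (|c * ∑ p ∈ N, X p ω * Y p ω| ^ (m' + 1)) ∂P
      ≤ ∫⁻ ω, ENNReal.ofReal (q * ∑ p ∈ N,
          (|X p ω| ^ (2 * (m' + 1)) + |Y p ω| ^ (2 * (m' + 1)))) ∂P :=
        lintegral_mono hpt
    _ = ∫⁻ ω, ENNReal.ofReal q * ∑ p ∈ N,
          (ENNReal.ofReal (|X p ω| ^ (2 * (m' + 1)))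
            + ENNReal.ofReal (|Y p ω| ^ (2 * (m' + 1)))) ∂P := by
        refine lintegral_congr fun ω => ?_
        rw [ENNReal.ofReal_mul hq0,
          ENNReal.ofReal_sum_of_nonneg (fun p _ => by positivity)]
        congr 1
        exact Finset.sum_congr rfl fun p _ =>
          ENNReal.ofReal_add (by positivity) (by positivity)
    _ = ENNReal.ofReal q * ∑ p ∈ N,
          (∫⁻ ω, (ENNReal.ofReal (|X p ω| ^ (2 * (m' + 1)))
            + ENNReal.ofReal (|Y p ω| ^ (2 * (m' + 1)))) ∂P) := by
        rw [lintegral_const_mul' _ _ ENNReal.ofReal_ne_top,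
          lintegral_finset_sum _ hmeas]
    _ ≤ ENNReal.ofReal q * ∑ _p ∈ N, (B + B) := by
        gcongr with p hp
        rw [lintegral_add_left ((hXm p hp).abs.pow_const _).ennreal_ofReal]
        exact add_le_add (hXb p hp) (hYb p hp)
    _ = ENNReal.ofReal q * ((N.card : ℝ≥0∞) * (2 * B)) := by
        rw [Finset.sum_const, nsmul_eq_mul, two_mul]
    _ = (ENNReal.ofReal q * 2) * ((N.card : ℝ≥0∞) * B) := by ring
    _ = ENNReal.ofReal (|c| ^ (m' + 1) * (N.card : ℝ) ^ m')
          * ((N.card : ℝ≥0∞) * B) := by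
        congr 1
        rw [show (2 : ℝ≥0∞) = ENNReal.ofReal 2 by norm_num,
          ← ENNReal.ofReal_mul hq0]
        congr 1
        rw [hqdef]
        ring
  
/-- Constant identity used at the end of the main proof. -/
lemma aux_const_id (m : ℕ) (hm : 1 ≤ m) (n T kn K : ℝ)
    (hn : 0 < n) (hT : 0 < T) (hkn : 0 < kn) :
    ((n / kn) / T) ^ m * (T * kn) ^ (m - 1) * ((T * kn) * (K * (1 / n) ^ (2 * m)))
      = K / n ^ m := by
  obtain ⟨m', rfl⟩ : ∃ m', m = m' + 1 := ⟨m - 1, by omega⟩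
  simp only [Nat.add_sub_cancel]
  have e : (n / kn / T) * (T * kn) = n := by field_simp
  have e2 : n * (1 / n) ^ 2 = 1 / n := by field_simp
  calc _ = K * (((n / kn / T) * (T * kn)) * (1 / n) ^ 2) ^ (m' + 1) := by ring
    _ = K / n ^ (m' + 1) := by
      rw [e, e2, one_div_pow, mul_one_div]

theorem drift_drift_term_bound (m : ℕ) (hm : 2 ≤ m) (K : ℝ) (hK : 0 < K) :
    ∃ C > 0, ∀ (Ω : Type) (_ : MeasurableSpace Ω) (P : Measure Ω),
      IsProbabilityMeasure P →
      ∀ aX aY : ℝ → Ω → ℝ,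
      Measurable (Function.uncurry aX) →
      Measurable (Function.uncurry aY) →
      (∀ s : ℝ, 0 ≤ s →
        ∫⁻ ω, ENNReal.ofReal (|aX s ω| ^ (2 * m)) ∂P ≤ ENNReal.ofReal K) →
      (∀ s : ℝ, 0 ≤ s →
        ∫⁻ ω, ENNReal.ofReal (|aY s ω| ^ (2 * m)) ∂P ≤ ENNReal.ofReal K) →
      ∀ n T kn : ℕ, 0 < n → 0 < T → 0 < kn → kn ∣ n →
      ∀ j : ℕ, 1 ≤ j → j ≤ n / kn →
      ∫⁻ ω, ENNReal.ofReal
          (|(∑ t ∈ Finset.Icc 1 T,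
              ((n : ℝ) / (kn : ℝ)) *
                ∑ ℓ ∈ Finset.Icc ((j - 1) * kn + 1) (j * kn),
                  (∫ s in ((t : ℝ) - 1 + ((ℓ : ℝ) - 1) / (n : ℝ))..(
                      (t : ℝ) - 1 + (ℓ : ℝ) / (n : ℝ)), aX s ω) *
                  (∫ s in ((t : ℝ) - 1 + ((ℓ : ℝ) - 1) / (n : ℝ))..(
                      (t : ℝ) - 1 + (ℓ : ℝ) / (n : ℝ)), aY s ω)) / (T : ℝ)| ^ m)
        ∂P ≤ ENNReal.ofReal (C / (n : ℝ) ^ m) := by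
  refine ⟨K, hK, ?_⟩
  intro Ω inst P hPP aX aY hmX hmY hKX hKY n T kn hn hT hkn hdvd j hj1 hj2
  haveI := hPP
  have hnR : (0 : ℝ) < (n : ℝ) := by exact_mod_cast hn
  have hTR : (0 : ℝ) < (T : ℝ) := by exact_mod_cast hT
  have hknR : (0 : ℝ) < (kn : ℝ) := by exact_mod_cast hkn
  have hmul : (j - 1) * kn + kn = j * kn := by
    cases j with
    | zero => omega
    | succ j' => simp [Nat.succ_sub_one, Nat.succ_mul]
  set N : Finset (ℕ × ℕ) :=
    Finset.Icc 1 T ×ˢ Finset.Icc ((j - 1) * kn + 1) (j * kn) with hN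
  have hc₀0 : 0 ≤ (n : ℝ) / (kn : ℝ) / (T : ℝ) := by positivity
  have hle : ∀ t ℓ : ℕ,
      (t : ℝ) - 1 + ((ℓ : ℝ) - 1) / (n : ℝ) ≤ (t : ℝ) - 1 + (ℓ : ℝ) / (n : ℝ) := by
    intro t ℓ
    have : ((ℓ : ℝ) - 1) / (n : ℝ) ≤ (ℓ : ℝ) / (n : ℝ) := by
      gcongr
      linarith
    linarith
  have hNne : N.Nonempty := by
    refine ⟨(1, (j - 1) * kn + 1), ?_⟩
    rw [hN, Finset.mem_product, Finset.mem_Icc, Finset.mem_Icc]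
    omega
  have hNcard : N.card = T * kn := by
    rw [hN, Finset.card_product, Nat.card_Icc, Nat.card_Icc]
    have h2 : j * kn + 1 - ((j - 1) * kn + 1) = kn := by omega
    rw [h2]
    simp
  -- measurability of the block integrals
  have hXmeas : ∀ p : ℕ × ℕ, Measurable fun ω =>
      (∫ s in ((p.1 : ℝ) - 1 + ((p.2 : ℝ) - 1) / (n : ℝ))..(
        (p.1 : ℝ) - 1 + (p.2 : ℝ) / (n : ℝ)), aX s ω) := by
    intro p
    have h := ((hmX.stronglyMeasurable).integral_prod_left
      (μ := volume.restrict (Set.Ioc ((p.1 : ℝ) - 1 + ((p.2 : ℝ) - 1) / (n : ℝ))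
        ((p.1 : ℝ) - 1 + (p.2 : ℝ) / (n : ℝ))))).measurable
    simpa only [intervalIntegral.integral_of_le (hle p.1 p.2)] using h
  have hYmeas : ∀ p : ℕ × ℕ, Measurable fun ω =>
      (∫ s in ((p.1 : ℝ) - 1 + ((p.2 : ℝ) - 1) / (n : ℝ))..(
        (p.1 : ℝ) - 1 + (p.2 : ℝ) / (n : ℝ)), aY s ω) := by
    intro p
    have h := ((hmY.stronglyMeasurable).integral_prod_left
      (μ := volume.restrict (Set.Ioc ((p.1 : ℝ) - 1 + ((p.2 : ℝ) - 1) / (n : ℝ))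
        ((p.1 : ℝ) - 1 + (p.2 : ℝ) / (n : ℝ))))).measurable
    simpa only [intervalIntegral.integral_of_le (hle p.1 p.2)] using h
  -- moment bound for each block integral
  have hlen : ∀ t ℓ : ℕ,
      ((t : ℝ) - 1 + (ℓ : ℝ) / (n : ℝ)) - ((t : ℝ) - 1 + ((ℓ : ℝ) - 1) / (n : ℝ))
        = (1 : ℝ) / (n : ℝ) := by
    intro t ℓ
    field_simp
    ring
  have hmemlo : ∀ p ∈ N, 0 ≤ (p.1 : ℝ) - 1 + ((p.2 : ℝ) - 1) / (n : ℝ) := by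
    intro p hp
    rw [hN, Finset.mem_product, Finset.mem_Icc, Finset.mem_Icc] at hp
    have h1 : (1 : ℝ) ≤ (p.1 : ℝ) := by exact_mod_cast hp.1.1
    have h2 : (1 : ℝ) ≤ (p.2 : ℝ) := by
      have : 1 ≤ p.2 := le_trans (by omega) hp.2.1
      exact_mod_cast this
    have : 0 ≤ ((p.2 : ℝ) - 1) / (n : ℝ) := div_nonneg (by linarith) hnR.le
    linarith
  have hp2m : 1 < 2 * m := by omega
  have hXb : ∀ p ∈ N, ∫⁻ ω, ENNReal.ofReal
      (|∫ s in ((p.1 : ℝ) - 1 + ((p.2 : ℝ) - 1) / (n : ℝ))..(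
        (p.1 : ℝ) - 1 + (p.2 : ℝ) / (n : ℝ)), aX s ω| ^ (2 * m)) ∂P
      ≤ ENNReal.ofReal K * ENNReal.ofReal ((1 : ℝ) / (n : ℝ)) ^ (2 * m) := by
    intro p hp
    have h := aux_moment P aX hmX hp2m hKX (hmemlo p hp) (hle p.1 p.2)
    rw [hlen p.1 p.2] at h
    exact h
  have hYb : ∀ p ∈ N, ∫⁻ ω, ENNReal.ofReal
      (|∫ s in ((p.1 : ℝ) - 1 + ((p.2 : ℝ) - 1) / (n : ℝ))..(
        (p.1 : ℝ) - 1 + (p.2 : ℝ) / (n : ℝ)), aY s ω| ^ (2 * m)) ∂P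
      ≤ ENNReal.ofReal K * ENNReal.ofReal ((1 : ℝ) / (n : ℝ)) ^ (2 * m) := by
    intro p hp
    have h := aux_moment P aY hmY hp2m hKY (hmemlo p hp) (hle p.1 p.2)
    rw [hlen p.1 p.2] at h
    exact h
  have hm1 : 1 ≤ m := by omega
  -- rewrite the integrand into the combined form
  have hrw : ∀ ω : Ω,
      (∑ t ∈ Finset.Icc 1 T,
          ((n : ℝ) / (kn : ℝ)) *
            ∑ ℓ ∈ Finset.Icc ((j - 1) * kn + 1) (j * kn),
              (∫ s in ((t : ℝ) - 1 + ((ℓ : ℝ) - 1) / (n : ℝ))..(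
                  (t : ℝ) - 1 + (ℓ : ℝ) / (n : ℝ)), aX s ω) *
              (∫ s in ((t : ℝ) - 1 + ((ℓ : ℝ) - 1) / (n : ℝ))..(
                  (t : ℝ) - 1 + (ℓ : ℝ) / (n : ℝ)), aY s ω)) / (T : ℝ)
        = ((n : ℝ) / (kn : ℝ) / (T : ℝ)) * ∑ p ∈ N,
            (∫ s in ((p.1 : ℝ) - 1 + ((p.2 : ℝ) - 1) / (n : ℝ))..(
              (p.1 : ℝ) - 1 + (p.2 : ℝ) / (n : ℝ)), aX s ω) *
            (∫ s in ((p.1 : ℝ) - 1 + ((p.2 : ℝ) - 1) / (n : ℝ))..(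
              (p.1 : ℝ) - 1 + (p.2 : ℝ) / (n : ℝ)), aY s ω) := by
    intro ω
    rw [hN]
    simp only [Finset.sum_product]
    rw [← Finset.mul_sum, mul_div_right_comm]
  calc ∫⁻ ω, ENNReal.ofReal
        (|(∑ t ∈ Finset.Icc 1 T,
            ((n : ℝ) / (kn : ℝ)) *
              ∑ ℓ ∈ Finset.Icc ((j - 1) * kn + 1) (j * kn),
                (∫ s in ((t : ℝ) - 1 + ((ℓ : ℝ) - 1) / (n : ℝ))..(
                    (t : ℝ) - 1 + (ℓ : ℝ) / (n : ℝ)), aX s ω) *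
                (∫ s in ((t : ℝ) - 1 + ((ℓ : ℝ) - 1) / (n : ℝ))..(
                    (t : ℝ) - 1 + (ℓ : ℝ) / (n : ℝ)), aY s ω)) / (T : ℝ)| ^ m) ∂P
      = ∫⁻ ω, ENNReal.ofReal
          (|((n : ℝ) / (kn : ℝ) / (T : ℝ)) * ∑ p ∈ N,
            (∫ s in ((p.1 : ℝ) - 1 + ((p.2 : ℝ) - 1) / (n : ℝ))..(
              (p.1 : ℝ) - 1 + (p.2 : ℝ) / (n : ℝ)), aX s ω) *
            (∫ s in ((p.1 : ℝ) - 1 + ((p.2 : ℝ) - 1) / (n : ℝ))..(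
              (p.1 : ℝ) - 1 + (p.2 : ℝ) / (n : ℝ)), aY s ω)| ^ m) ∂P := by
        exact lintegral_congr fun ω => by rw [hrw ω]
    _ ≤ ENNReal.ofReal (|(n : ℝ) / (kn : ℝ) / (T : ℝ)| ^ m * (N.card : ℝ) ^ (m - 1))
          * ((N.card : ℝ≥0∞)
            * (ENNReal.ofReal K * ENNReal.ofReal ((1 : ℝ) / (n : ℝ)) ^ (2 * m))) :=
        aux_combine P hm1 hNne _ _ (fun p _ => hXmeas p) (fun p _ => hYmeas p)
          _ hXb hYb _
    _ ≤ ENNReal.ofReal (K / (n : ℝ) ^ m) := by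
        rw [hNcard]
        rw [show ((T * kn : ℕ) : ℝ≥0∞) = ENNReal.ofReal ((T * kn : ℕ) : ℝ) from
          (ENNReal.ofReal_natCast _).symm]
        rw [← ENNReal.ofReal_pow (by positivity), ← ENNReal.ofReal_mul (by positivity),
          ← ENNReal.ofReal_mul (by positivity), ← ENNReal.ofReal_mul (by positivity)]
        apply ENNReal.ofReal_le_ofReal
        apply le_of_eq
        have hid := aux_const_id m hm1 (n : ℝ) (T : ℝ) (kn : ℝ) K hnR hTR hknR
        rw [abs_of_nonneg hc₀0]
        push_cast
        linear_combination hid
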